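/- arXiv:2110.03472 — 2 statements merged into one kernel-verified Lean document; each statement's English description precedes it below -/
import Mathlib

section
/- Let D be a triangulated category with partial silting objects P and T such that susp(P) ⊆ susp(T) ⊆ P^{⊥_{>0}}. Then the truncation σ_P^{>0}T is a partial silting object of the triangulated subcategory P^{⊥_ℤ}, generating the restricted t-structure (susp(T) ∩ P^{⊥_ℤ}, T^{⊥_{≤0}} ∩ P^{⊥_ℤ}). Moreover, if T is silting in D (i.e., susp(T) = T^{⊥_{>0}}), then σ_P^{>0}T is silting in P^{⊥_ℤ}. -/
open CategoryTheory Limits Pretriangulated ZeroObject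

universe v u

namespace Paper

variable {C : Type u} [Category.{v} C] [Preadditive C] [HasZeroObject C]
  [HasShift C ℤ] [∀ n : ℤ, (CategoryTheory.shiftFunctor C n).Additive] [Pretriangulated C]
  [HasBinaryBiproducts C]

/-- A class of objects closed under isomorphism. -/
def ClosedIso (P : C → Prop) : Prop := ∀ ⦃X Y : C⦄, (X ≅ Y) → P X → P Y

/-- A class of objects closed under extensions. -/
def ExtClosed (P : C → Prop) : Prop :=
  ∀ T : Triangle C, T ∈ (distTriang C) → P T.obj₁ → P T.obj₃ → P T.obj₂

/-- A suspended subcategory: additive (iso-closed, contains 0, closed under finite sums via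
extensions), closed under the suspension `Σ = ⟦1⟧` and under extensions. -/
structure Suspended (P : C → Prop) : Prop where
  iso : ClosedIso P
  zero : P 0
  shift : ∀ ⦃X : C⦄, P X → P (X⟦(1:ℤ)⟧)
  ext : ExtClosed P

/-- A t-structure `(L, G) = (D^{≤0}, D^{>0})`: Hom-orthogonality, every object is an extension,
`L` is suspended; both classes are closed under isomorphism. -/
structure IsTStr (L G : C → Prop) : Prop where
  isoL : ClosedIso L
  isoG : ClosedIso G
  zeroL : L 0
  homZero : ∀ ⦃X Y : C⦄, L X → G Y → ∀ f : X ⟶ Y, f = 0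
  trunc : ∀ X : C, ∃ (A B : C) (f : A ⟶ X) (g : X ⟶ B) (h : B ⟶ A⟦(1:ℤ)⟧),
    Triangle.mk f g h ∈ (distTriang C) ∧ L A ∧ G B
  shiftL : ∀ ⦃X : C⦄, L X → L (X⟦(1:ℤ)⟧)
  extL : ExtClosed L

/-- The right orthogonal `U^{⊥₀}` of a class of objects. -/
def rightOrth (U : C → Prop) (Y : C) : Prop := ∀ X : C, U X → ∀ f : X ⟶ Y, f = 0

/-- `Y ∈ P^{⊥_{≤ m}}`: `Hom(P, Σ^i Y) = 0` for all `i ≤ m`. -/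
def perpLe (P : C) (m : ℤ) (Y : C) : Prop := ∀ i : ℤ, i ≤ m → ∀ f : P ⟶ Y⟦i⟧, f = 0

/-- `Y ∈ P^{⊥_{> m}}`: `Hom(P, Σ^i Y) = 0` for all `i > m`. -/
def perpGt (P : C) (m : ℤ) (Y : C) : Prop := ∀ i : ℤ, m < i → ∀ f : P ⟶ Y⟦i⟧, f = 0

/-- `Y ∈ P^{⊥_ℤ}`: `Hom(P, Σ^i Y) = 0` for all integers `i`. -/
def perpZ (P : C) (Y : C) : Prop := ∀ i : ℤ, ∀ f : P ⟶ Y⟦i⟧, f = 0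

/-- `X ∈ ^{⊥_{>0}}P`: `Hom(X, Σ^i P) = 0` for all `i > 0`. -/
def leftPerpGt0 (P : C) (X : C) : Prop := ∀ i : ℤ, 0 < i → ∀ f : X ⟶ P⟦i⟧, f = 0

/-- `susp(P)`, the smallest suspended subcategory containing `P`. -/
def suspObj (P : C) (X : C) : Prop := ∀ U : C → Prop, Suspended U → U P → U X

/-- An additive subcategory closed under direct summands. -/
structure AddSub (U : C → Prop) : Prop where
  iso : ClosedIso U
  zero : U 0
  biprod : ∀ X Y : C, U X → U Y → U (X ⊞ Y)
  summand : ∀ X Y : C, U (X ⊞ Y) → U X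

/-- `add(P)`: the additive closure of `P` (finite direct sums of direct summands). -/
def addObj (P : C) (X : C) : Prop := ∀ U : C → Prop, AddSub U → U P → U X

/-- A thick triangulated subcategory. -/
structure ThickSub (U : C → Prop) : Prop where
  iso : ClosedIso U
  zero : U 0
  shift : ∀ ⦃X : C⦄, U X → ∀ n : ℤ, U (X⟦n⟧)
  ext : ExtClosed U
  summand : ∀ X Y : C, U (X ⊞ Y) → U X

/-- `thick(P)`: the smallest thick subcategory containing `P`. -/
def thickObj (P : C) (X : C) : Prop := ∀ U : C → Prop, ThickSub U → U P → U X

/-- A triangulated subcategory (iso-closed, shift-closed both ways, extension-closed). -/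
structure TriangSub (U : C → Prop) : Prop where
  iso : ClosedIso U
  zero : U 0
  shift : ∀ ⦃X : C⦄, U X → ∀ n : ℤ, U (X⟦n⟧)
  ext : ExtClosed U

/-- `P` is presilting: `Hom(P, Σ^n P) = 0` for all `n > 0`. -/
def Presilting (P : C) : Prop := ∀ n : ℤ, 0 < n → ∀ f : P ⟶ P⟦n⟧, f = 0

/-- `P` is partial silting: `(susp(P), P^{⊥_{≤0}})` is a t-structure and
`susp(P) ⊆ P^{⊥_{>0}}`. -/
def PartialSilting (P : C) : Prop :=
  IsTStr (suspObj P) (perpLe P 0) ∧ ∀ X : C, suspObj P X → perpGt P 0 X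

/-- `S` is silting: partial silting with `susp(S) = S^{⊥_{>0}}`. -/
def Silting (S : C) : Prop :=
  PartialSilting S ∧ ∀ X : C, suspObj S X ↔ perpGt S 0 X

/-- `X ∈ D^{≤ n}` for the t-structure with aisle `L`. -/
def DLe (L : C → Prop) (n : ℤ) (X : C) : Prop := L (X⟦n⟧)

/-- `X ∈ D^{> m}` for the t-structure with co-aisle `G`. -/
def DGt (G : C → Prop) (m : ℤ) (X : C) : Prop := G (X⟦m⟧)

/-- The t-structure `(L, G)` is bounded. -/
def BoundedTStr (L G : C → Prop) : Prop :=
  ∀ X : C, (∃ n : ℤ, DLe L n X) ∧ (∃ m : ℤ, DGt G m X)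

/-- `H` is (a choice of) the `i`-th cohomology `H^i(X) = σ^{≤ i} σ^{> i-1} X` of `X` with
respect to the t-structure `(L, G)`, expressed by the two truncation triangles. -/
def IsCohomAt (L G : C → Prop) (i : ℤ) (X H : C) : Prop :=
  ∃ (A B B' : C) (f : A ⟶ X) (g : X ⟶ B) (h : B ⟶ A⟦(1:ℤ)⟧)
    (f' : H ⟶ B) (g' : B ⟶ B') (h' : B' ⟶ H⟦(1:ℤ)⟧),
    Triangle.mk f g h ∈ (distTriang C) ∧ DLe L (i-1) A ∧ DGt G (i-1) B ∧
    Triangle.mk f' g' h' ∈ (distTriang C) ∧ DLe L i H ∧ DGt G i B'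

/-- The heart `D^0 = D^{≤0} ∩ D^{>-1}` of the t-structure `(L, G)`. -/
def Heart (L G : C → Prop) (X : C) : Prop := L X ∧ DGt G (-1) X

/-- A t-exact subcategory: a triangulated subcategory closed under the truncation `σ^{≤0}`
of the t-structure `(L, G)`. -/
def TExactSub (L G : C → Prop) (S : C → Prop) : Prop :=
  TriangSub S ∧
    ∀ (X A B : C) (f : A ⟶ X) (g : X ⟶ B) (h : B ⟶ A⟦(1:ℤ)⟧),
      S X → Triangle.mk f g h ∈ (distTriang C) → L A → G B → S A


/-- The class of objects `U` admits coreflections: every object has a couniversal morphism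
from `U`, i.e. the inclusion of `U` admits a right adjoint. -/
def HasCoreflections (U : C → Prop) : Prop :=
  ∀ X : C, ∃ (A : C) (ε : A ⟶ X), U A ∧
    ∀ A' : C, U A' → ∀ g : A' ⟶ X, ∃! g' : A' ⟶ A, g' ≫ ε = g

/-- `X` is a `2_S`-term object: `X ∈ add(S) * Σ add(S)`. -/
def TwoTerm (S X : C) : Prop :=
  ∃ (S₁ S₀ : C) (f : S₁ ⟶ S₀) (g : S₀ ⟶ X) (h : X ⟶ S₁⟦(1:ℤ)⟧),
    Triangle.mk f g h ∈ (distTriang C) ∧ addObj S S₁ ∧ addObj S S₀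

/-- `X` is indecomposable. -/
def Indec (X : C) : Prop :=
  ¬ IsZero X ∧ ∀ Y Z : C, (X ≅ Y ⊞ Z) → IsZero Y ∨ IsZero Z

/-- `add(A)` is contravariantly finite: every object admits a right `add(A)`-approximation. -/
def ContravFinAdd (A : C) : Prop :=
  ∀ X : C, ∃ (Q : C) (q : Q ⟶ X), addObj A Q ∧
    ∀ Q' : C, addObj A Q' → ∀ g : Q' ⟶ X, ∃ g' : Q' ⟶ Q, g' ≫ q = g

/-- `S` is a bounded silting object. -/
def BoundedSilting (S : C) : Prop :=
  Silting S ∧ BoundedTStr (suspObj S) (perpLe S 0)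

/-- Hom-finiteness of `C` over a field `k`. -/
def HomFinite (k : Type w) [Field k] [Linear k C] : Prop :=
  ∀ X Y : C, FiniteDimensional k (X ⟶ Y)

/-- The Krull–Schmidt property: every object is a finite direct sum of objects with local
endomorphism rings. -/
def KrullSchmidt : Prop :=
  ∀ X : C, ∃ l : List C, (∀ Y ∈ l, IsLocalRing (End Y)) ∧
    Nonempty (X ≅ l.foldr (· ⊞ ·) 0)

/-- A wide subcategory of the heart of the t-structure `(L, G)`: closed under isomorphisms,
extensions, kernels and cokernels (the latter two expressed via cones and cohomology). -/
structure HeartWide (L G W : C → Prop) : Prop where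
  sub : ∀ ⦃X : C⦄, W X → Heart L G X
  iso : ClosedIso W
  ext : ∀ (X Y Z : C) (f : X ⟶ Y) (g : Y ⟶ Z) (h : Z ⟶ X⟦(1:ℤ)⟧),
    W X → W Z → Heart L G Y → Triangle.mk f g h ∈ (distTriang C) → W Y
  kerCoker : ∀ (X Y Z : C) (f : X ⟶ Y) (g : Y ⟶ Z) (h : Z ⟶ X⟦(1:ℤ)⟧),
    W X → W Y → Triangle.mk f g h ∈ (distTriang C) →
    (∀ K : C, IsCohomAt L G (-1) Z K → W K) ∧ (∀ Q : C, IsCohomAt L G 0 Z Q → W Q)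

/-- The subgroup of relations defining `K₀` of the thick subcategory `S`. -/
def K0Rel (S : C → Prop) : AddSubgroup (FreeAbelianGroup C) :=
  AddSubgroup.closure
    {x | (∃ X : C, ¬ S X ∧ x = FreeAbelianGroup.of X) ∨
      ∃ T : Triangle C, T ∈ (distTriang C) ∧ S T.obj₁ ∧ S T.obj₂ ∧ S T.obj₃ ∧
        x = FreeAbelianGroup.of T.obj₂ - FreeAbelianGroup.of T.obj₁
          - FreeAbelianGroup.of T.obj₃}

/-- The Grothendieck group of the (thick) subcategory `S`. -/
abbrev K0 (S : C → Prop) := FreeAbelianGroup C ⧸ K0Rel S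

/-- The class `[X]` in the Grothendieck group. -/
def K0cls (S : C → Prop) (X : C) : K0 S :=
  QuotientAddGroup.mk (FreeAbelianGroup.of X)

/-- A `2_S`-term presilting sequence `(X₁, …, X_t)` in the ambient subcategory `Amb` with respect
to the silting object `S`, defined recursively: the last term `X` is an indecomposable `2_S`-term
presilting object, and the truncated sequence is a `2_{σ^{>0}_X T}`-term presilting sequence in
`Amb ∩ X^{⊥_ℤ}`, where `T = X ⊕ Q` is the Bongartz completion of `X`. -/
inductive PresiltSeq : (C → Prop) → C → List C → Prop
  | nil (Amb : C → Prop) (S : C) : PresiltSeq Amb S []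
  | cons (Amb : C → Prop) (S X : C) (l : List C)
      (hX : Amb X) (h2 : TwoTerm S X) (hpre : Presilting X) (hind : Indec X)
      -- Bongartz completion `T = X ⊞ Q`, via an approximation triangle `S → Q → X₀ → ΣS`
      (Q X₀ : C) (i : S ⟶ Q) (p : Q ⟶ X₀) (β : X₀ ⟶ S⟦(1:ℤ)⟧)
      (hB : Triangle.mk i p β ∈ (distTriang C)) (hX₀ : addObj X X₀)
      (happrox : ∀ X' : C, addObj X X' → ∀ g : X' ⟶ S⟦(1:ℤ)⟧, ∃ g', g' ≫ β = g)
      -- the truncation `T' = σ^{>0}_X (X ⊞ Q)`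
      (T' A : C) (f : A ⟶ X ⊞ Q) (g : X ⊞ Q ⟶ T') (h : T' ⟶ A⟦(1:ℤ)⟧)
      (hTr : Triangle.mk f g h ∈ (distTriang C)) (hA : suspObj X A) (hT' : perpLe X 0 T')
      (hrest : PresiltSeq (fun Y => Amb Y ∧ perpZ X Y) T' l) :
      PresiltSeq Amb S (l ++ [X])


/-! ### Auxiliary lemmas for Statement 10 -/

section AuxStatement10

set_option linter.unusedSectionVars false

open Preadditive

lemma aux_vanish_iso {Q Y Y' : C} (e : Y ≅ Y') (h : ∀ f : Q ⟶ Y', f = 0) (f : Q ⟶ Y) :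
    f = 0 := by
  have h2 := h (f ≫ e.hom)
  rw [← Category.comp_id f, ← e.hom_inv_id, ← Category.assoc, h2, zero_comp]

lemma aux_vanish_shift_add {Q Y : C} (a b c : ℤ) (hc : a + b = c)
    (h : ∀ f : Q ⟶ Y⟦c⟧, f = 0) (f : Q ⟶ (Y⟦a⟧)⟦b⟧) : f = 0 :=
  aux_vanish_iso (((shiftFunctorAdd' C a b c hc).app Y).symm) h f

lemma aux_vanish_unshift {Q Y : C} (h : ∀ f : Q ⟶ Y⟦(0:ℤ)⟧, f = 0) (f : Q ⟶ Y) : f = 0 :=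
  aux_vanish_iso (((shiftFunctorZero C ℤ).app Y).symm) h f

lemma aux_vanish_shift_map {X Y : C} (n : ℤ) (h : ∀ g : X ⟶ Y, g = 0) (f : X⟦n⟧ ⟶ Y⟦n⟧) :
    f = 0 := by
  obtain ⟨g, rfl⟩ := (shiftFunctor C n).map_surjective f
  rw [h g, Functor.map_zero]

lemma aux_covVanish₂ {Q : C} {Tr : Triangle C} (hTr : Tr ∈ distTriang C) (i : ℤ)
    (h1 : ∀ f : Q ⟶ Tr.obj₁⟦i⟧, f = 0) (h3 : ∀ f : Q ⟶ Tr.obj₃⟦i⟧, f = 0)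
    (f : Q ⟶ Tr.obj₂⟦i⟧) : f = 0 := by
  have hTs := Triangle.shift_distinguished Tr hTr i
  have h0 : f ≫ ((Triangle.shiftFunctor C i).obj Tr).mor₂ = 0 := h3 _
  obtain ⟨g, hg⟩ := Triangle.coyoneda_exact₂ _ hTs f h0
  rw [hg, h1 g]; exact zero_comp

lemma suspObj_self (Q : C) : suspObj Q Q := fun _ _ hQ => hQ

lemma suspended_suspObj (Q : C) : Suspended (suspObj Q) where
  iso := by intro X Y e hX U hU hQ; exact hU.iso e (hX U hU hQ)
  zero := fun U hU _ => hU.zero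
  shift := fun _ hX U hU hQ => hU.shift (hX U hU hQ)
  ext := fun Tr hTr ha hb U hU hQ => hU.ext Tr hTr (ha U hU hQ) (hb U hU hQ)

lemma aux_window {Q Y : C} {S : ℤ → Prop} (hS : ∀ i, S i → S (i-1))
    (hbase : ∀ i, S i → ∀ f : Q ⟶ Y⟦i⟧, f = 0) {X : C} (hX : suspObj Q X) :
    ∀ i, S i → ∀ f : X ⟶ Y⟦i⟧, f = 0 := by
  refine hX (fun Z => ∀ i, S i → ∀ f : Z ⟶ Y⟦i⟧, f = 0) ?_ hbase
  constructor
  · intro Z W e hZ i hi f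
    have h2 := hZ i hi (e.hom ≫ f)
    rw [← Category.id_comp f, ← e.inv_hom_id, Category.assoc, h2, comp_zero]
  · intro i _ f
    exact (isZero_zero C).eq_of_src f 0
  · intro Z hZ i hi f
    have h1 : ∀ q : Z ⟶ (Y⟦i⟧)⟦(-1:ℤ)⟧, q = 0 := by
      intro q
      exact aux_vanish_iso (((shiftFunctorAdd' C i (-1) (i-1) (by ring)).app Y).symm)
        (hZ (i-1) (hS i hi)) q
    have h2 : (shiftFunctor C (-1:ℤ)).map f = 0 := by
      have hq := h1 (((shiftFunctorCompIsoId C (1:ℤ) (-1:ℤ) (by ring)).inv.app Z) ≫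
        (shiftFunctor C (-1:ℤ)).map f)
      have hq2 := congrArg (fun z =>
        ((shiftFunctorCompIsoId C (1:ℤ) (-1:ℤ) (by ring)).hom.app Z) ≫ z) hq
      simpa using hq2
    exact (shiftFunctor C (-1:ℤ)).map_injective (by rw [h2, Functor.map_zero])
  · intro Tr hTr ha hb i hi f
    obtain ⟨g, hg⟩ := Triangle.yoneda_exact₂ Tr hTr f (ha i hi _)
    rw [hg, hb i hi g, comp_zero]

lemma aux_vanish_perpZ {Q Y : C} (hY : perpZ Q Y) {X : C} (hX : suspObj Q X) (i : ℤ) :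
    ∀ f : X ⟶ Y⟦i⟧, f = 0 :=
  aux_window (S := fun _ => True) (fun _ _ => trivial) (fun j _ => hY j) hX i trivial

lemma aux_vanish_perpZ₀ {Q Y : C} (hY : perpZ Q Y) {X : C} (hX : suspObj Q X) (f : X ⟶ Y) :
    f = 0 :=
  aux_vanish_unshift (aux_vanish_perpZ hY hX 0) f

lemma aux_vanish_perpLe {Q Y : C} (hY : perpLe Q 0 Y) {X : C} (hX : suspObj Q X) :
    ∀ i ≤ (0:ℤ), ∀ f : X ⟶ Y⟦i⟧, f = 0 :=
  fun i hi => aux_window (S := fun j => j ≤ 0) (fun j hj => by omega)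
    (fun j hj => hY j hj) hX i hi

lemma aux_vanish_perpLe₀ {Q Y : C} (hY : perpLe Q 0 Y) {X : C} (hX : suspObj Q X)
    (f : X ⟶ Y) : f = 0 :=
  aux_vanish_unshift (aux_vanish_perpLe hY hX 0 le_rfl) f

lemma suspended_perpZ (Q : C) : Suspended (perpZ Q) where
  iso := by
    intro X Y e hX i f
    have h2 := hX i (f ≫ (shiftFunctor C i).map e.inv)
    have h3 := congrArg (fun z => z ≫ (shiftFunctor C i).map e.hom) h2
    simpa [← Functor.map_comp] using h3
  zero := fun i f => ((shiftFunctor C i).map_isZero (isZero_zero C)).eq_of_tgt f 0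
  shift := by
    intro X hX i f
    exact aux_vanish_shift_add 1 i (1+i) rfl (hX (1+i)) f
  ext := fun Tr hTr ha hb i f => aux_covVanish₂ hTr i (ha i) (hb i) f

lemma perpLe_of_perpZ {Q Y : C} (h : perpZ Q Y) : perpLe Q 0 Y := fun i _ => h i

lemma aux_kill {S : C} {Tr : Triangle C} (hTr : Tr ∈ distTriang C)
    (hA : suspObj S Tr.obj₁) {W : C} (hW : perpLe S 0 W)
    (θ : Tr.obj₃ ⟶ W) (h0 : Tr.mor₂ ≫ θ = 0) : θ = 0 := by
  obtain ⟨r, hr⟩ := Triangle.yoneda_exact₃ Tr hTr θ h0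
  rw [hr, aux_vanish_perpLe₀ hW ((suspended_suspObj S).shift hA) r]; exact comp_zero

lemma trunc_unique {S : C} {T₁ T₂ : Triangle C}
    (h₁ : T₁ ∈ distTriang C) (h₂ : T₂ ∈ distTriang C)
    (hA₁ : suspObj S T₁.obj₁) (hW₁ : perpLe S 0 T₁.obj₃)
    (hA₂ : suspObj S T₂.obj₁) (hW₂ : perpLe S 0 T₂.obj₃)
    (e : T₁.obj₂ ≅ T₂.obj₂) : Nonempty (T₁.obj₃ ≅ T₂.obj₃) := by
  obtain ⟨φ, hφ⟩ := Triangle.yoneda_exact₂ T₁ h₁ (e.hom ≫ T₂.mor₂)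
    (aux_vanish_perpLe₀ hW₂ hA₁ _)
  obtain ⟨ψ, hψ⟩ := Triangle.yoneda_exact₂ T₂ h₂ (e.inv ≫ T₁.mor₂)
    (aux_vanish_perpLe₀ hW₁ hA₂ _)
  have c₁ : φ ≫ ψ = 𝟙 _ := by
    rw [← sub_eq_zero]
    refine aux_kill h₁ hA₁ hW₁ _ ?_
    rw [comp_sub, Category.comp_id, ← Category.assoc, ← hφ, Category.assoc, ← hψ, ← Category.assoc,
      e.hom_inv_id, Category.id_comp, sub_self]
  have c₂ : ψ ≫ φ = 𝟙 _ := by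
    rw [← sub_eq_zero]
    refine aux_kill h₂ hA₂ hW₂ _ ?_
    rw [comp_sub, Category.comp_id, ← Category.assoc, ← hψ, Category.assoc, ← hφ, ← Category.assoc,
      e.inv_hom_id, Category.id_comp, sub_self]
  exact ⟨⟨φ, ψ, c₁, c₂⟩⟩

lemma mem_susp_of_orth {S X : C} (hS : PartialSilting S)
    (h : ∀ Y : C, perpLe S 0 Y → ∀ f : X ⟶ Y, f = 0) : suspObj S X := by
  obtain ⟨A, B, a, b, c, hTr, hA, hB⟩ := hS.1.trunc X
  have hb0 : b = 0 := h B hB b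
  obtain ⟨r, hr⟩ := Triangle.yoneda_exact₃ _ hTr (𝟙 B) (by simp [hb0]; exact zero_comp)
  have hBz : IsZero B := by
    rw [IsZero.iff_id_eq_zero, hr,
      aux_vanish_perpLe₀ hB ((suspended_suspObj S).shift hA) r]; exact comp_zero
  haveI : IsIso (Triangle.mk a b c).mor₁ := (Triangle.isZero₃_iff_isIso₁ _ hTr).1 hBz
  exact (suspended_suspObj S).iso (@asIso _ _ _ _ (Triangle.mk a b c).mor₁ this) hA

/-- The class of objects all of whose `σ_R^{>0}`-truncations lie in `susp N`. -/
@[reducible] def Vclass (R N : C) : C → Prop := fun Z =>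
  ∀ ⦃A₂ W₂ : C⦄ (f₂ : A₂ ⟶ Z) (g₂ : Z ⟶ W₂) (h₂ : W₂ ⟶ A₂⟦(1:ℤ)⟧),
    Triangle.mk f₂ g₂ h₂ ∈ (distTriang C) → suspObj R A₂ → perpLe R 0 W₂ → suspObj N W₂

lemma T_mem_Vclass {R N Z A : C} {a : A ⟶ Z} {b : Z ⟶ N} {c : N ⟶ A⟦(1:ℤ)⟧}
    (hTr : Triangle.mk a b c ∈ distTriang C) (hA : suspObj R A) (hN : perpLe R 0 N) :
    Vclass R N Z := by
  intro A₂ W₂ f₂ g₂ h₂ htr hA₂ hW₂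
  obtain ⟨e⟩ := trunc_unique hTr htr hA hN hA₂ hW₂ (Iso.refl _)
  exact (suspended_suspObj N).iso e (suspObj_self N)

lemma suspended_Vclass {R N : C} (hR : PartialSilting R) (hN : perpZ R N) :
    Suspended (Vclass R N) := by
  constructor
  · -- closed under isomorphisms
    intro Z₁ Z₂ e hZ₁ A₂ W₂ f₂ g₂ h₂ htr hA₂ hW₂
    obtain ⟨A₁, W₁, a₁, g₁, c₁, ht₁, hA₁, hW₁⟩ := hR.1.trunc Z₁
    obtain ⟨eW⟩ := trunc_unique ht₁ htr hA₁ hW₁ hA₂ hW₂ e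
    exact (suspended_suspObj N).iso eW (hZ₁ a₁ g₁ c₁ ht₁ hA₁ hW₁)
  · -- contains zero
    intro A₂ W₂ f₂ g₂ h₂ htr hA₂ hW₂
    obtain ⟨r, hr⟩ := Triangle.yoneda_exact₃ _ htr (𝟙 W₂)
      (by erw [Category.comp_id]; exact (isZero_zero C).eq_of_src g₂ 0)
    have hWz : IsZero W₂ := by
      rw [IsZero.iff_id_eq_zero, hr,
        aux_vanish_perpLe₀ hW₂ ((suspended_suspObj R).shift hA₂) r]; exact comp_zero
    exact (suspended_suspObj N).iso hWz.isoZero.symm (suspended_suspObj N).zero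
  · -- closed under shift
    intro Z hZ A₂ W₂ f₂ g₂ h₂ htr hA₂ hW₂
    obtain ⟨A₁, W₁, a₁, g₁, c₁, ht₁, hA₁, hW₁⟩ := hR.1.trunc Z
    have hW₁N : suspObj N W₁ := hZ a₁ g₁ c₁ ht₁ hA₁ hW₁
    have hW₁Z : perpZ R W₁ := hW₁N _ (suspended_perpZ R) hN
    have hts := Triangle.shift_distinguished _ ht₁ 1
    obtain ⟨eW⟩ := trunc_unique hts htr
      ((suspended_suspObj R).shift hA₁)
      (perpLe_of_perpZ ((suspended_perpZ R).shift hW₁Z))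
      hA₂ hW₂ (Iso.refl (Z⟦(1:ℤ)⟧))
    exact (suspended_suspObj N).iso eW ((suspended_suspObj N).shift hW₁N)
  · -- closed under extensions
    intro M hM hV₁ hV₃ A₂ W₂ a₂ g₂ c₂ ht₂ hA₂ hW₂
    obtain ⟨A₁, W₁, a₁, g₁, c₁, ht₁, hA₁, hW₁⟩ := hR.1.trunc M.obj₁
    have hW₁N : suspObj N W₁ := hV₁ a₁ g₁ c₁ ht₁ hA₁ hW₁
    have hW₁Z : perpZ R W₁ := hW₁N _ (suspended_perpZ R) hN
    obtain ⟨ub, hub'⟩ : ∃ u : W₁ ⟶ W₂, M.mor₁ ≫ g₂ = g₁ ≫ u :=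
      Triangle.yoneda_exact₂ _ ht₁ (M.mor₁ ≫ g₂) (aux_vanish_perpLe₀ hW₂ hA₁ _)
    obtain ⟨D, ρ, δ, htD⟩ := distinguished_cocone_triangle ub
    obtain ⟨m, hm₁, hm₂⟩ := complete_distinguished_triangle_morphism M (Triangle.mk ub ρ δ)
      hM htD g₁ g₂ (by exact hub')
    have hm₁' : M.mor₂ ≫ m = g₂ ≫ ρ := hm₁
    have hm₂' : M.mor₃ ≫ g₁⟦(1:ℤ)⟧' = m ≫ δ := hm₂
    obtain ⟨E, qE, rE, htE⟩ := distinguished_cocone_triangle m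
    have htA := inv_rot_of_distTriang _ htE
    -- (α) : factorization of maps to coaisle objects through `m`
    have hα : ∀ (Y : C), perpLe R 0 Y → ∀ fz : M.obj₃ ⟶ Y, ∃ φ : D ⟶ Y, fz = m ≫ φ := by
      intro Y hY fz
      obtain ⟨f₂', hf₂'⟩ : ∃ w : W₂ ⟶ Y, M.mor₂ ≫ fz = g₂ ≫ w :=
        Triangle.yoneda_exact₂ _ ht₂ (M.mor₂ ≫ fz) (aux_vanish_perpLe₀ hY hA₂ _)
      have e1 : g₁ ≫ (ub ≫ f₂') = 0 := by
        rw [← Category.assoc, ← hub', Category.assoc, ← hf₂', ← Category.assoc,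
          comp_distTriang_mor_zero₁₂ _ hM, zero_comp]
      have hub0 : ub ≫ f₂' = 0 := aux_kill ht₁ hA₁ hY (ub ≫ f₂') e1
      obtain ⟨φ₀, hφ₀'⟩ : ∃ p : D ⟶ Y, f₂' = ρ ≫ p :=
        Triangle.yoneda_exact₂ _ htD f₂' hub0
      have hd : M.mor₂ ≫ (fz - m ≫ φ₀) = 0 := by
        erw [comp_sub, hf₂', ← Category.assoc, hm₁', Category.assoc, ← hφ₀', sub_self]
      obtain ⟨ε, hε⟩ := Triangle.yoneda_exact₃ _ hM (fz - m ≫ φ₀) hd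
      have ht₁s := rot_of_distTriang _ (rot_of_distTriang _ (rot_of_distTriang _ ht₁))
      obtain ⟨ε', hε''⟩ : ∃ w : W₁⟦(1:ℤ)⟧ ⟶ Y, ε = (-(g₁⟦(1:ℤ)⟧')) ≫ w :=
        Triangle.yoneda_exact₂ _ ht₁s ε (by
          have h5 : (-(a₁⟦(1:ℤ)⟧')) ≫ ε = 0 := by
            rw [neg_comp,
              aux_vanish_perpLe₀ hY ((suspended_suspObj R).shift hA₁) (a₁⟦(1:ℤ)⟧' ≫ ε),
              neg_zero]
          exact h5)
      refine ⟨φ₀ - δ ≫ ε', ?_⟩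
      calc fz = (fz - m ≫ φ₀) + m ≫ φ₀ := by abel
        _ = M.mor₃ ≫ ((-(g₁⟦(1:ℤ)⟧')) ≫ ε') + m ≫ φ₀ := by rw [hε, hε'']
        _ = -((M.mor₃ ≫ g₁⟦(1:ℤ)⟧') ≫ ε') + m ≫ φ₀ := by
            rw [neg_comp, comp_neg, ← Category.assoc]
        _ = -((m ≫ δ) ≫ ε') + m ≫ φ₀ := by rw [hm₂']
        _ = m ≫ (φ₀ - δ ≫ ε') := by erw [comp_sub, ← Category.assoc]; abel
    -- (β) : injectivity of `m ≫ -` on maps to shifted coaisle objects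
    have hβ : ∀ (Y : C), perpLe R 0 Y → ∀ φ : D ⟶ Y⟦(1:ℤ)⟧, m ≫ φ = 0 → φ = 0 := by
      intro Y hY φ hmφ
      have e1 : g₂ ≫ (ρ ≫ φ) = 0 := by
        erw [← Category.assoc, ← hm₁', Category.assoc, hmφ, comp_zero]
      have hρφ : ρ ≫ φ = 0 := by
        obtain ⟨rr, hrr⟩ := Triangle.yoneda_exact₃ _ ht₂ (ρ ≫ φ) (by exact e1)
        erw [hrr, aux_vanish_shift_map 1 (aux_vanish_perpLe₀ hY hA₂) rr, comp_zero]; rfl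
      obtain ⟨r1, hr1'⟩ : ∃ r : W₁⟦(1:ℤ)⟧ ⟶ Y⟦(1:ℤ)⟧, φ = δ ≫ r :=
        Triangle.yoneda_exact₃ _ htD φ (by exact hρφ)
      have e2 : M.mor₃ ≫ (g₁⟦(1:ℤ)⟧' ≫ r1) = 0 := by
        erw [← Category.assoc, hm₂', Category.assoc, ← hr1', hmφ]
      have hM2 := rot_of_distTriang _ (rot_of_distTriang _ hM)
      obtain ⟨t, ht''⟩ : ∃ t : M.obj₂⟦(1:ℤ)⟧ ⟶ Y⟦(1:ℤ)⟧,
          g₁⟦(1:ℤ)⟧' ≫ r1 = (-(M.mor₁⟦(1:ℤ)⟧')) ≫ t :=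
        Triangle.yoneda_exact₂ _ hM2 (g₁⟦(1:ℤ)⟧' ≫ r1) (by exact e2)
      obtain ⟨t₀, rfl⟩ := (shiftFunctor C (1:ℤ)).map_surjective t
      obtain ⟨t₁, ht₁''⟩ : ∃ w : W₂ ⟶ Y, t₀ = g₂ ≫ w :=
        Triangle.yoneda_exact₂ _ ht₂ t₀ (aux_vanish_perpLe₀ hY hA₂ _)
      have e3 : g₁⟦(1:ℤ)⟧' ≫ (r1 + ub⟦(1:ℤ)⟧' ≫ t₁⟦(1:ℤ)⟧') = 0 := by
        have exp1 : g₁⟦(1:ℤ)⟧' ≫ r1 = -((M.mor₁ ≫ g₂ ≫ t₁)⟦(1:ℤ)⟧') := by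
          rw [ht'', ht₁'', neg_comp, ← Functor.map_comp]
        have exp2 : g₁⟦(1:ℤ)⟧' ≫ (ub⟦(1:ℤ)⟧' ≫ t₁⟦(1:ℤ)⟧') = (M.mor₁ ≫ g₂ ≫ t₁)⟦(1:ℤ)⟧' := by
          rw [← Category.assoc, ← Functor.map_comp, ← hub', ← Functor.map_comp,
            Category.assoc]
        rw [comp_add, exp1, exp2, neg_add_cancel]
      have ht₁s := rot_of_distTriang _ (rot_of_distTriang _ (rot_of_distTriang _ ht₁))
      obtain ⟨s, hs⟩ := Triangle.yoneda_exact₃ _ ht₁s (r1 + ub⟦(1:ℤ)⟧' ≫ t₁⟦(1:ℤ)⟧') (by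
        have h6 : (-(g₁⟦(1:ℤ)⟧')) ≫ (r1 + ub⟦(1:ℤ)⟧' ≫ t₁⟦(1:ℤ)⟧') = 0 := by
          rw [neg_comp, e3, neg_zero]
        exact h6)
      have hs0 : s = 0 :=
        aux_vanish_shift_map 1
          (aux_vanish_perpLe₀ hY ((suspended_suspObj R).shift hA₁)) s
      have hψ0 : r1 + ub⟦(1:ℤ)⟧' ≫ t₁⟦(1:ℤ)⟧' = 0 := by rw [hs, hs0]; exact comp_zero
      have hr1'' : r1 = -(ub⟦(1:ℤ)⟧' ≫ t₁⟦(1:ℤ)⟧') := eq_neg_of_add_eq_zero_left hψ0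
      have hz : δ ≫ ub⟦(1:ℤ)⟧' = 0 := comp_distTriang_mor_zero₃₁ _ htD
      rw [hr1', hr1'', comp_neg, ← Category.assoc, hz, zero_comp, neg_zero]
    -- the cone of the inverse rotation is in `susp R`
    have hAm : suspObj R ((Triangle.mk m qE rE).invRotate.obj₁) := by
      refine mem_susp_of_orth hR ?_
      intro Y hY ξ
      have htB := inv_rot_of_distTriang _ htA
      have hχ : (Triangle.mk m qE rE).invRotate.invRotate.mor₁ ≫ ξ = 0 := by
        set tB := (Triangle.mk m qE rE).invRotate.invRotate with htBdef
        have hφm : m ≫ ((shiftEquiv C (1:ℤ)).counitIso.inv.app D ≫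
            (shiftFunctor C (1:ℤ)).map (tB.mor₁ ≫ ξ)) = 0 := by
          have hstep : m ≫ ((shiftEquiv C (1:ℤ)).counitIso.inv.app D ≫
              (shiftFunctor C (1:ℤ)).map (tB.mor₁ ≫ ξ)) =
              tB.mor₃ ≫ (shiftFunctor C (1:ℤ)).map (tB.mor₁ ≫ ξ) := by
            erw [← Category.assoc]; rfl
          erw [hstep, Functor.map_comp, ← Category.assoc,
            comp_distTriang_mor_zero₃₁ _ htB, zero_comp]; rfl
        have hφ0 := hβ Y hY _ hφm
        have hmap : (shiftFunctor C (1:ℤ)).map (tB.mor₁ ≫ ξ) = 0 := by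
          have h7 := congrArg (fun z => ((shiftEquiv C (1:ℤ)).counitIso.hom.app D) ≫ z) hφ0
          simp only [comp_zero] at h7
          erw [← Category.assoc, Iso.hom_inv_id_app, Category.id_comp] at h7
          exact h7
        exact (shiftFunctor C (1:ℤ)).map_injective (by rw [hmap, Functor.map_zero])
      obtain ⟨η, hη⟩ := Triangle.yoneda_exact₂ _ (inv_rot_of_distTriang _ htA) ξ hχ
      obtain ⟨φ₂, hφ₂⟩ := hα Y hY η
      erw [hη, hφ₂, ← Category.assoc]
      have h12 : (Triangle.mk m qE rE).invRotate.invRotate.mor₂ ≫ m = 0 :=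
        comp_distTriang_mor_zero₁₂ _ htA
      rw [h12]; exact zero_comp
    -- `D` lies in the coaisle of `R`
    have hDle : perpLe R 0 D := by
      intro i hi q
      refine aux_covVanish₂ (rot_of_distTriang _ htD) i (fun q' => hW₂ i hi q')
        (fun q' => ?_) q
      exact aux_vanish_shift_add 1 i (1+i) rfl (fun q'' => hW₁Z (1+i) q'') q'
    have hDN : suspObj N D :=
      hV₃ (Triangle.mk m qE rE).invRotate.mor₁ (Triangle.mk m qE rE).invRotate.mor₂
        (Triangle.mk m qE rE).invRotate.mor₃ (by exact htA) (by exact hAm) (by exact hDle)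
    exact (suspended_suspObj N).ext _ htD hW₁N hDN

lemma hard_incl {R N Tt : C} (hR : PartialSilting R) (hN : perpZ R N)
    (hTV : Vclass R N Tt) {X : C} (hX : suspObj Tt X) (hXZ : perpZ R X) : suspObj N X := by
  have hXV : Vclass R N X := hX _ (suspended_Vclass hR hN) hTV
  obtain ⟨A₁, W₁, a₁, g₁, c₁, ht₁, hA₁, hW₁⟩ := hR.1.trunc X
  have hWN := hXV a₁ g₁ c₁ ht₁ hA₁ hW₁
  have hA₁Z : perpZ R A₁ := by
    intro i q
    rcases lt_or_ge 0 i with hi | hi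
    · exact hR.2 A₁ hA₁ i hi q
    · refine aux_covVanish₂ (inv_rot_of_distTriang _ ht₁) i (fun q' => ?_)
        (fun q' => hXZ i q') q
      exact aux_vanish_shift_add (-1) i (-1+i) rfl (fun q'' => hW₁ (-1+i) (by omega) q'') q'
  have hAz : IsZero A₁ := by
    rw [IsZero.iff_id_eq_zero]
    exact aux_vanish_perpZ₀ hA₁Z hA₁ (𝟙 A₁)
  haveI : IsIso (Triangle.mk a₁ g₁ c₁).mor₂ := (Triangle.isZero₁_iff_isIso₂ _ ht₁).1 hAz
  exact (suspended_suspObj N).iso (asIso (Triangle.mk a₁ g₁ c₁).mor₂).symm hWN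

end AuxStatement10

/-- For partial silting objects `P`, `T` with
`susp(P) ⊆ susp(T) ⊆ P^{⊥_{>0}}`, the truncation `T' = σ_P^{>0}T` is a partial silting object of
`P^{⊥_ℤ}` generating the restricted t-structure `(susp(T) ∩ P^{⊥_ℤ}, T^{⊥_{≤0}} ∩ P^{⊥_ℤ})`;
if `T` is silting in `D`, then `T'` is silting in `P^{⊥_ℤ}`. -/
theorem statement10 (P T : C) (hP : PartialSilting P) (hT : PartialSilting T)
    (h1 : ∀ X : C, suspObj P X → suspObj T X) (h2 : ∀ X : C, suspObj T X → perpGt P 0 X)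
    -- the truncation triangle defining `T' = σ_P^{>0}T`
    (A T' : C) (f : A ⟶ T) (g : T ⟶ T') (h : T' ⟶ A⟦(1:ℤ)⟧)
    (hTr : Triangle.mk f g h ∈ (distTriang C)) (hA : suspObj P A) (hT' : perpLe P 0 T') :
    perpZ P T' ∧
    -- aisle of the restricted t-structure: `susp(T') = susp(T) ∩ P^{⊥_ℤ}`
    (∀ X : C, suspObj T' X ↔ (suspObj T X ∧ perpZ P X)) ∧
    -- co-aisle: `(T')^{⊥_{≤0}} ∩ P^{⊥_ℤ} = T^{⊥_{≤0}} ∩ P^{⊥_ℤ}`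
    (∀ Y : C, perpZ P Y → (perpLe T' 0 Y ↔ perpLe T 0 Y)) ∧
    -- `T'` is partial silting in `P^{⊥_ℤ}`: `susp(T') ⊆ (T')^{⊥_{>0}}` and truncation
    -- triangles exist within `P^{⊥_ℤ}`
    (∀ X : C, suspObj T' X → perpGt T' 0 X) ∧
    (∀ X : C, perpZ P X →
      ∃ (A' B' : C) (f' : A' ⟶ X) (g' : X ⟶ B') (h' : B' ⟶ A'⟦(1:ℤ)⟧),
        Triangle.mk f' g' h' ∈ (distTriang C) ∧
        suspObj T' A' ∧ perpZ P A' ∧ perpLe T' 0 B' ∧ perpZ P B') ∧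
    -- if `T` is silting, then `T'` is silting in `P^{⊥_ℤ}`
    ((∀ X : C, suspObj T X ↔ perpGt T 0 X) →
      ∀ X : C, perpZ P X → (suspObj T' X ↔ perpGt T' 0 X)) := by
  have hPsusp := suspended_suspObj P
  have hTsusp := suspended_suspObj T
  -- (1) `T' ∈ P^{⊥_ℤ}`
  have hZT' : perpZ P T' := by
    intro i q
    rcases le_or_gt i 0 with hi | hi
    · exact hT' i hi q
    · refine aux_covVanish₂ (rot_of_distTriang _ hTr) i
        (fun q' => h2 T (suspObj_self T) i hi q') (fun q' => ?_) q
      exact aux_vanish_shift_add 1 i (1+i) rfl (fun q'' => hP.2 A hA (1+i) (by omega) q'') q'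
  have hT'Z : ∀ {X : C}, suspObj T' X → perpZ P X :=
    fun hX => hX _ (suspended_perpZ P) hZT'
  have hT'T : suspObj T T' :=
    hTsusp.ext _ (rot_of_distTriang _ hTr) (suspObj_self T) (hTsusp.shift (h1 A hA))
  have hsub : ∀ X : C, suspObj T' X → suspObj T X := fun X hX => hX _ hTsusp hT'T
  have hTV : Vclass P T' T := T_mem_Vclass hTr hA hT'
  have hhard : ∀ X : C, suspObj T X → perpZ P X → suspObj T' X :=
    fun X hX hXZ => hard_incl hP hZT' hTV hX hXZ
  -- (3) the coaisles agree on `P^{⊥_ℤ}`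
  have hco : ∀ Y : C, perpZ P Y → (perpLe T' 0 Y ↔ perpLe T 0 Y) := by
    intro Y hY
    constructor
    · intro hLe i hi φ
      obtain ⟨r, hr⟩ := Triangle.yoneda_exact₂ _ hTr φ (aux_vanish_perpZ hY hA i _)
      have hr' : φ = g ≫ r := hr
      rw [hr', hLe i hi r, comp_zero]
    · intro hLe i hi φ
      obtain ⟨r, hr⟩ := Triangle.yoneda_exact₂ _ (rot_of_distTriang _ hTr) φ
        (show g ≫ φ = 0 from hLe i hi _)
      have hr' : φ = h ≫ r := hr
      rw [hr', aux_vanish_perpZ hY (hPsusp.shift hA) i r, comp_zero]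
  -- (4)
  have hconj4 : ∀ X : C, suspObj T' X → perpGt T' 0 X := by
    intro X hX i hi φ
    obtain ⟨r, hr⟩ := Triangle.yoneda_exact₂ _ (rot_of_distTriang _ hTr) φ
      (show g ≫ φ = 0 from hT.2 X (hsub X hX) i hi _)
    have hr' : φ = h ≫ r := hr
    rw [hr', aux_vanish_perpZ (hT'Z hX) (hPsusp.shift hA) i r, comp_zero]
  refine ⟨hZT', ?_, hco, hconj4, ?_, ?_⟩
  · -- (2)
    exact fun X => ⟨fun hX => ⟨hsub X hX, hT'Z hX⟩, fun hx => hhard X hx.1 hx.2⟩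
  · -- (5) truncation triangles inside `P^{⊥_ℤ}`
    intro X hX
    obtain ⟨A₀, B₀, f₀, g₀, h₀, t₀, hA₀, hB₀⟩ := hT.1.trunc X
    have hB₀Z : perpZ P B₀ := by
      intro i q
      rcases le_or_gt i 0 with hi | hi
      · exact aux_vanish_perpLe hB₀ (h1 P (suspObj_self P)) i hi q
      · refine aux_covVanish₂ (rot_of_distTriang _ t₀) i (fun q' => hX i q')
          (fun q' => ?_) q
        exact aux_vanish_shift_add 1 i (1+i) rfl
          (fun q'' => h2 A₀ hA₀ (1+i) (by omega) q'') q'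
    have hA₀Z : perpZ P A₀ := by
      intro i q
      rcases lt_or_ge 0 i with hi | hi
      · exact h2 A₀ hA₀ i hi q
      · refine aux_covVanish₂ (inv_rot_of_distTriang _ t₀) i (fun q' => ?_)
          (fun q' => hX i q') q
        exact aux_vanish_shift_add (-1) i (-1+i) rfl (fun q'' => hB₀Z (-1+i) q'') q'
    exact ⟨A₀, B₀, f₀, g₀, h₀, t₀, hhard A₀ hA₀ hA₀Z, hA₀Z, (hco B₀ hB₀Z).mpr hB₀, hB₀Z⟩
  · -- (6) silting descends
    intro hsilt X hXZ
    refine ⟨hconj4 X, ?_⟩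
    intro hGt
    refine hhard X ((hsilt X).mpr ?_) hXZ
    intro i hi φ
    obtain ⟨r, hr⟩ := Triangle.yoneda_exact₂ _ hTr φ (aux_vanish_perpZ hXZ hA i _)
    have hr' : φ = g ≫ r := hr
    rw [hr', hGt i hi r, comp_zero]

end Paper
end

section
/- Let D be a triangulated category and P, Q objects such that P is partial silting, Q is a 2-term presilting object over some silting object, and the composition Q∘P := σ_P^{-1}(Q) = P ⊕ Q' is defined via the truncation triangle P' → Q' → Q → ΣP' with P' ∈ susp(P). Then the perpendicular category (P ⊕ Q')^{⊥_ℤ} equals P^{⊥_ℤ} ∩ Q^{⊥_ℤ}. -/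
open CategoryTheory Limits Pretriangulated ZeroObject

universe v u

namespace Paper

variable {C : Type u} [Category.{v} C] [Preadditive C] [HasZeroObject C]
  [HasShift C ℤ] [∀ n : ℤ, (CategoryTheory.shiftFunctor C n).Additive] [Pretriangulated C]
  [HasBinaryBiproducts C]

/-- If the composition `Q ∘ P = σ_P^{-1}(Q) = P ⊞ Q'` is defined via a
truncation triangle `P' → Q' → Q → ΣP'` with `P' ∈ susp(P)`, then
`(P ⊞ Q')^{⊥_ℤ} = P^{⊥_ℤ} ∩ Q^{⊥_ℤ}`. -/
theorem statement13 (P : C) (hP : PartialSilting P)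
    (Q : C) (hQpre : Presilting Q) (hQperp : perpZ P Q)
    (h2 : ∃ T : C, Silting T ∧ TwoTerm T Q)
    (Q' P' : C) (a : P' ⟶ Q') (b : Q' ⟶ Q) (c : Q ⟶ P'⟦(1:ℤ)⟧)
    (hTr : Triangle.mk a b c ∈ (distTriang C)) (hP' : suspObj P P') :
    ∀ Y : C, perpZ (P ⊞ Q') Y ↔ (perpZ P Y ∧ perpZ Q Y) := by
  -- The class of objects `X` with `Hom(X, Σ^i Y) = 0` for all `i` is suspended.
  intro Y
  set U : C → Prop := fun X => ∀ i : ℤ, ∀ f : X ⟶ Y⟦i⟧, f = 0 with hU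
  have hUsusp : Suspended U := by
    constructor
    · intro X X' e hX i f
      have : e.hom ≫ f = 0 := hX i _
      calc f = e.inv ≫ e.hom ≫ f := by simp
        _ = 0 := by rw [this]; simp
    · intro i f
      exact (Limits.isZero_zero C).eq_of_src f 0
    · intro X hX i f
      apply (shiftFunctor C (-1 : ℤ)).map_injective
      rw [Functor.map_zero]
      rw [← cancel_epi ((shiftFunctorCompIsoId C (1 : ℤ) (-1 : ℤ) (by ring)).inv.app X),
        ← cancel_mono ((shiftFunctorAdd' C i (-1 : ℤ) (i - 1) (by ring)).inv.app Y)]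
      have h0 := hX (i - 1) ((shiftFunctorCompIsoId C (1 : ℤ) (-1 : ℤ) (by ring)).inv.app X ≫
        (shiftFunctor C (-1 : ℤ)).map f ≫
        (shiftFunctorAdd' C i (-1 : ℤ) (i - 1) (by ring)).inv.app Y)
      simpa using h0
    · intro T hT h1 h3 i f
      obtain ⟨g, hg⟩ := Triangle.yoneda_exact₂ T hT f (h1 i _)
      rw [hg, h3 i g, comp_zero]
  -- basic biproduct facts
  constructor
  · intro hPQ'
    have hPY : perpZ P Y := by
      intro i f
      have h0 := hPQ' i ((biprod.fst : P ⊞ Q' ⟶ P) ≫ f)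
      have : f = (biprod.inl : P ⟶ P ⊞ Q') ≫ (biprod.fst : P ⊞ Q' ⟶ P) ≫ f := by simp
      rw [this, h0, comp_zero]
    refine ⟨hPY, ?_⟩
    -- `Q' ∈ ⊥` since it is a summand; then use the triangle to transfer to `Q`.
    have hQ'Y : perpZ Q' Y := by
      intro i f
      have h0 := hPQ' i ((biprod.snd : P ⊞ Q' ⟶ Q') ≫ f)
      have : f = (biprod.inr : Q' ⟶ P ⊞ Q') ≫ (biprod.snd : P ⊞ Q' ⟶ Q') ≫ f := by simp
      rw [this, h0, comp_zero]
    have hP'Y : U P' := hP' U hUsusp hPY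
    intro i f
    obtain ⟨g, hg⟩ := Triangle.yoneda_exact₃ (Triangle.mk a b c) hTr f (hQ'Y i (b ≫ f))
    rw [hg, hUsusp.shift hP'Y i g]; exact comp_zero
  · rintro ⟨hPY, hQY⟩
    have hP'Y : U P' := hP' U hUsusp hPY
    have hQ'Y : perpZ Q' Y := by
      intro i f
      obtain ⟨g, hg⟩ := Triangle.yoneda_exact₂ (Triangle.mk a b c) hTr f (hP'Y i _)
      rw [hg, hQY i g]; exact comp_zero
    intro i f
    have : f = (biprod.fst ≫ biprod.inl + biprod.snd ≫ biprod.inr) ≫ f := by simp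
    rw [this, Preadditive.add_comp, Category.assoc, Category.assoc,
      hPY i ((biprod.inl : P ⟶ P ⊞ Q') ≫ f), hQ'Y i ((biprod.inr : Q' ⟶ P ⊞ Q') ≫ f),
      comp_zero, comp_zero, add_zero]


end Paper
end
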